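/- arXiv:q-alg/9708020 — 3 statements merged into one kernel-verified Lean document; each statement's English description precedes it below -/
import Mathlib

section
/- Let k be a commutative ring, A a commutative unital associative k-algebra, and * a formal star product on A with first-order term B₁. Define the bracket {f,g} := B₁(f,g) − B₁(g,f) for f, g ∈ A. Then { , } satisfies the Jacobi identity: for all f, g, h ∈ A, {f,{g,h}} + {g,{h,f}} + {h,{f,g}} = 0. -/
/-- A formal star product on a commutative unital `k`-algebra `A`: an associative,
`k[[ℏ]]`-bilinear product on `A[[ℏ]] = PowerSeries A`, determined on constant series by a
sequence of `k`-bilinear maps `B n : A → A → A` via `f * g = Σ_{n≥0} ℏⁿ Bₙ(f,g)`,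
with zeroth term the original commutative product. -/
structure FormalStarProduct (k A : Type*) [CommRing k] [CommRing A] [Algebra k A] where
  /-- the star product on `A[[ℏ]]` -/
  smul' : PowerSeries A → PowerSeries A → PowerSeries A
  /-- the sequence of `k`-bilinear maps `Bₙ` -/
  B : ℕ → A →ₗ[k] A →ₗ[k] A
  add_left : ∀ f g h : PowerSeries A, smul' (f + g) h = smul' f h + smul' g h
  add_right : ∀ f g h : PowerSeries A, smul' f (g + h) = smul' f g + smul' f h
  hbar_smul_left : ∀ (c : PowerSeries k) (f g : PowerSeries A),
      smul' (c • f) g = c • smul' f g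
  hbar_smul_right : ∀ (c : PowerSeries k) (f g : PowerSeries A),
      smul' f (c • g) = c • smul' f g
  assoc : ∀ f g h : PowerSeries A, smul' (smul' f g) h = smul' f (smul' g h)
  star_eq : ∀ f g : A,
      smul' (PowerSeries.C f) (PowerSeries.C g) = PowerSeries.mk fun n => B n f g
  B_zero : ∀ f g : A, B 0 f g = f * g

namespace FSPAux
open PowerSeries
variable {k A : Type*} [CommRing k] [CommRing A] [Algebra k A]

lemma X_pow_smul (m : ℕ) (f : PowerSeries A) :
    ((X : PowerSeries k) ^ m) • f = (X : PowerSeries A) ^ m * f := by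
  show PowerSeries.map (algebraMap k A) _ * f = _
  simp

lemma mk_decomp (b : ℕ → A) :
    (PowerSeries.mk b : PowerSeries A) =
      C (b 0) + ((X : PowerSeries k) ^ 1) • C (b 1)
        + ((X : PowerSeries k) ^ 2) • C (b 2)
        + ((X : PowerSeries k) ^ 3) • PowerSeries.mk (fun n => b (n + 3)) := by
  rw [X_pow_smul, X_pow_smul, X_pow_smul]
  ext n
  simp only [map_add, coeff_mk, coeff_C, coeff_X_pow_mul']
  rcases n with _ | _ | _ | n <;> simp

lemma key (S : FormalStarProduct k A) (x y z : A) :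
    S.B 2 (x * y) z + S.B 1 (S.B 1 x y) z + S.B 2 x y * z =
    S.B 2 x (y * z) + S.B 1 x (S.B 1 y z) + x * S.B 2 y z := by
  have ha := S.assoc (PowerSeries.C x) (PowerSeries.C y) (PowerSeries.C z)
  rw [S.star_eq x y, S.star_eq y z, mk_decomp (k := k) (fun n => S.B n x y),
      mk_decomp (k := k) (fun n => S.B n y z)] at ha
  rw [S.add_left, S.add_left, S.add_left, S.add_right, S.add_right, S.add_right,
      S.hbar_smul_left, S.hbar_smul_left, S.hbar_smul_left,
      S.hbar_smul_right, S.hbar_smul_right, S.hbar_smul_right,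
      S.star_eq, S.star_eq, S.star_eq, S.star_eq, S.star_eq, S.star_eq] at ha
  have h2 := congrArg (coeff 2) ha
  simp only [map_add, X_pow_smul, coeff_X_pow_mul', coeff_mk, S.B_zero] at h2
  norm_num at h2
  linear_combination h2

lemma mulcR (S : FormalStarProduct k A) (a b c : A) :
    S.B 2 a (b * c) = S.B 2 a (c * b) := by rw [mul_comm]

lemma mulcL (S : FormalStarProduct k A) (a b c : A) :
    S.B 2 (a * b) c = S.B 2 (b * a) c := by rw [mul_comm]

end FSPAux

/-- the bracket `{f,g} := B₁(f,g) − B₁(g,f)` induced by a formal star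
product satisfies the Jacobi identity. -/
theorem formalStarProduct_bracket_jacobi
    {k A : Type*} [CommRing k] [CommRing A] [Algebra k A]
    (S : FormalStarProduct k A)
    (br : A → A → A) (hbr : ∀ f g : A, br f g = S.B 1 f g - S.B 1 g f)
    (f g h : A) :
    br f (br g h) + br g (br h f) + br h (br f g) = 0 := by
  simp only [hbr, map_sub, LinearMap.sub_apply]
  linear_combination -(FSPAux.key S f g h) - FSPAux.key S g h f - FSPAux.key S h f g
    + FSPAux.key S f h g + FSPAux.key S h g f + FSPAux.key S g f h
    + FSPAux.mulcR S f h g + FSPAux.mulcR S h g f + FSPAux.mulcR S g f h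
    + FSPAux.mulcL S g h f + FSPAux.mulcL S h f g + FSPAux.mulcL S f g h
end

section
/- Let k be a commutative ring, A a commutative unital associative k-algebra, and * a formal star product on A with first-order term B₁. Then the bracket {f,g} := B₁(f,g) − B₁(g,f) endows A with the structure of a Poisson algebra over k: { , } is k-bilinear, antisymmetric, satisfies the Jacobi identity, and is a derivation of the commutative product in each argument. -/
open PowerSeries in
private lemma fsp_coeff_zero_Xsmul {k A : Type*} [CommRing k] [CommRing A] [Algebra k A]
    (f : PowerSeries A) : coeff 0 ((X : PowerSeries k) • f) = 0 := by
  rw [Algebra.smul_def]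
  show coeff 0 (map (algebraMap k A) X * f) = 0
  rw [map_X, coeff_zero_X_mul]

open PowerSeries in
private lemma fsp_coeff_succ_Xsmul {k A : Type*} [CommRing k] [CommRing A] [Algebra k A]
    (f : PowerSeries A) (n : ℕ) :
    coeff (n + 1) ((X : PowerSeries k) • f) = coeff n f := by
  rw [Algebra.smul_def]
  show coeff (n + 1) (map (algebraMap k A) X * f) = _
  rw [map_X, coeff_succ_X_mul]

open PowerSeries in
private lemma fsp_decomp {k A : Type*} [CommRing k] [CommRing A] [Algebra k A]
    (F : PowerSeries A) : F =
    C (coeff 0 F)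
    + (X : PowerSeries k) • (C (coeff 1 F)
    + (X : PowerSeries k) • (C (coeff 2 F)
    + (X : PowerSeries k) • mk (fun n => coeff (n + 3) F))) := by
  ext n
  rcases n with (_ | _ | _ | n) <;>
    simp [map_add, fsp_coeff_zero_Xsmul, fsp_coeff_succ_Xsmul, PowerSeries.coeff_C,
      PowerSeries.coeff_mk]

open PowerSeries in
private lemma fsp_expand_left {k A : Type*} [CommRing k] [CommRing A] [Algebra k A]
    (S : FormalStarProduct k A) (F : PowerSeries A) (h : A) :
    S.smul' F (C h) =
      mk (fun n => S.B n (coeff 0 F) h)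
      + (X : PowerSeries k) • (mk (fun n => S.B n (coeff 1 F) h)
      + (X : PowerSeries k) • (mk (fun n => S.B n (coeff 2 F) h)
      + (X : PowerSeries k) • S.smul' (mk fun n => coeff (n + 3) F) (C h))) := by
  conv_lhs => rw [fsp_decomp (k := k) F]
  rw [S.add_left, S.hbar_smul_left, S.add_left, S.hbar_smul_left, S.add_left,
    S.hbar_smul_left, S.star_eq, S.star_eq, S.star_eq]

open PowerSeries in
private lemma fsp_expand_right {k A : Type*} [CommRing k] [CommRing A] [Algebra k A]
    (S : FormalStarProduct k A) (f : A) (G : PowerSeries A) :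
    S.smul' (C f) G =
      mk (fun n => S.B n f (coeff 0 G))
      + (X : PowerSeries k) • (mk (fun n => S.B n f (coeff 1 G))
      + (X : PowerSeries k) • (mk (fun n => S.B n f (coeff 2 G))
      + (X : PowerSeries k) • S.smul' (C f) (mk fun n => coeff (n + 3) G))) := by
  conv_lhs => rw [fsp_decomp (k := k) G]
  rw [S.add_right, S.hbar_smul_right, S.add_right, S.hbar_smul_right, S.add_right,
    S.hbar_smul_right, S.star_eq, S.star_eq, S.star_eq]

open PowerSeries in
private lemma fsp_eq1 {k A : Type*} [CommRing k] [CommRing A] [Algebra k A]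
    (S : FormalStarProduct k A) (f g h : A) :
    S.B 1 (f * g) h + S.B 1 f g * h = S.B 1 f (g * h) + f * S.B 1 g h := by
  have hassoc := S.assoc (C f) (C g) (C h)
  rw [S.star_eq f g, S.star_eq g h] at hassoc
  have h1 := congrArg (coeff 1) hassoc
  rw [fsp_expand_left S _ h, fsp_expand_right S f _] at h1
  simp only [map_add, fsp_coeff_zero_Xsmul, fsp_coeff_succ_Xsmul, coeff_mk] at h1
  -- h1 : B 1 (B 0 f g) h + B 0 (B 1 f g) h = B 1 f (B 0 g h) + B 0 f (B 1 g h)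
  rw [S.B_zero, S.B_zero, S.B_zero, S.B_zero] at h1
  linear_combination h1

open PowerSeries in
private lemma fsp_eq2 {k A : Type*} [CommRing k] [CommRing A] [Algebra k A]
    (S : FormalStarProduct k A) (f g h : A) :
    S.B 2 (f * g) h + S.B 1 (S.B 1 f g) h + S.B 2 f g * h =
      S.B 2 f (g * h) + S.B 1 f (S.B 1 g h) + f * S.B 2 g h := by
  have hassoc := S.assoc (C f) (C g) (C h)
  rw [S.star_eq f g, S.star_eq g h] at hassoc
  have h2 := congrArg (coeff 2) hassoc
  rw [fsp_expand_left S _ h, fsp_expand_right S f _] at h2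
  simp only [map_add, fsp_coeff_zero_Xsmul, fsp_coeff_succ_Xsmul, coeff_mk] at h2
  rw [S.B_zero, S.B_zero, S.B_zero, S.B_zero] at h2
  linear_combination h2


/-- the bracket `{f,g} := B₁(f,g) − B₁(g,f)` induced by a formal star
product endows `A` with a Poisson algebra structure over `k`: it is `k`-bilinear,
antisymmetric, satisfies the Jacobi identity, and is a derivation of the commutative
product in each argument. -/
theorem formalStarProduct_bracket_poisson
    {k A : Type*} [CommRing k] [CommRing A] [Algebra k A]
    (S : FormalStarProduct k A)
    (br : A → A → A) (hbr : ∀ f g : A, br f g = S.B 1 f g - S.B 1 g f) :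
    -- `k`-bilinearity
    (∀ f g h : A, br (f + g) h = br f h + br g h) ∧
    (∀ f g h : A, br f (g + h) = br f g + br f h) ∧
    (∀ (c : k) (f g : A), br (c • f) g = c • br f g) ∧
    (∀ (c : k) (f g : A), br f (c • g) = c • br f g) ∧
    -- antisymmetry
    (∀ f g : A, br f g = - br g f) ∧
    -- Jacobi identity
    (∀ f g h : A, br f (br g h) + br g (br h f) + br h (br f g) = 0) ∧
    -- Leibniz rule (derivation in each argument)
    (∀ f g h : A, br f (g * h) = br f g * h + g * br f h) ∧
    (∀ f g h : A, br (f * g) h = br f h * g + f * br g h) := by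
  have antisym : ∀ f g : A, br f g = - br g f := by
    intro f g; rw [hbr, hbr]; ring
  have leib : ∀ f g h : A, br f (g * h) = br f g * h + g * br f h := by
    intro f g h
    simp only [hbr]
    have mb : ∀ x y z : A, S.B 1 (x * y) z = S.B 1 (y * x) z := fun x y z => by rw [mul_comm]
    have mb2 : ∀ x y z : A, S.B 1 x (y * z) = S.B 1 x (z * y) := fun x y z => by rw [mul_comm]
    linear_combination -(fsp_eq1 S f g h) + (fsp_eq1 S g f h) - (fsp_eq1 S g h f)
      + mb f g h + mb2 g f h
  refine ⟨?_, ?_, ?_, ?_, antisym, ?_, leib, ?_⟩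
  · intro f g h; simp only [hbr, map_add, LinearMap.add_apply]; ring
  · intro f g h; simp only [hbr, map_add, LinearMap.add_apply]; ring
  · intro f g h
    simp only [hbr, map_smul, LinearMap.smul_apply, smul_sub]
  · intro f g h
    simp only [hbr, map_smul, LinearMap.smul_apply, smul_sub]
  · intro f g h
    simp only [hbr, map_sub, LinearMap.sub_apply]
    have mc : ∀ x y z : A, S.B 2 (x * y) z = S.B 2 (y * x) z := fun x y z => by rw [mul_comm]
    have mc2 : ∀ x y z : A, S.B 2 x (y * z) = S.B 2 x (z * y) := fun x y z => by rw [mul_comm]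
    linear_combination -(fsp_eq2 S f g h) + (fsp_eq2 S f h g) - (fsp_eq2 S g h f)
      + (fsp_eq2 S g f h) - (fsp_eq2 S h f g) + (fsp_eq2 S h g f)
      + mc f g h + mc2 f h g + mc g h f + mc2 g f h + mc h f g + mc2 h g f
  · intro f g h
    rw [antisym (f * g) h, leib h f g, antisym h f, antisym h g]
    ring
end

section
/- Let k be a commutative ring and H a bialgebra over k with multiplication m, comultiplication Δ : H → H ⊗ H and counit ε : H → k. Let F be an invertible element of the algebra H ⊗ H satisfying the twist equation ((Δ ⊗ id)(F))·(F ⊗ 1) = ((id ⊗ Δ)(F))·(1 ⊗ F) in H ⊗ H ⊗ H, together with the counit normalizations (ε ⊗ id)(F) = 1 and (id ⊗ ε)(F) = 1. Then H, with its original algebra structure, the twisted comultiplication Δ_F(h) := F⁻¹ · Δ(h) · F, and the original counit ε, is again a bialgebra over k; in particular Δ_F is a coassociative algebra homomorphism H → H ⊗ H and ε satisfies the counit axioms (ε ⊗ id) ∘ Δ_F = id = (id ⊗ ε) ∘ Δ_F. -/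
open TensorProduct

set_option maxHeartbeats 1000000

/-- Drinfeld twist of a bialgebra. Let `H` be a bialgebra over a commutative
ring `k`, and let `F ∈ H ⊗ H` be invertible (with inverse `Finv`), satisfying the twist
equation `((Δ ⊗ id)(F))·(F ⊗ 1) = ((id ⊗ Δ)(F))·(1 ⊗ F)` in `H ⊗ H ⊗ H` and the counit
normalizations `(ε ⊗ id)(F) = 1`, `(id ⊗ ε)(F) = 1`. Then `H`, with its original algebra
structure, the twisted comultiplication `Δ_F(h) := F⁻¹·Δ(h)·F`, and the original counit
`ε`, is again a bialgebra: `Δ_F` is a (`k`-linear) coassociative algebra homomorphism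
`H → H ⊗ H` and `ε` satisfies the counit axioms `(ε ⊗ id) ∘ Δ_F = id = (id ⊗ ε) ∘ Δ_F`. -/
theorem bialgebra_twist
    (k H : Type*) [CommRing k] [Ring H] [Bialgebra k H]
    (F Finv : H ⊗[k] H)
    (hFinv : F * Finv = 1) (hFinv' : Finv * F = 1)
    (htwist : (Algebra.TensorProduct.assoc k k k H H H)
        ((LinearMap.rTensor H (Coalgebra.comul (R := k) (A := H)) F) * (F ⊗ₜ[k] (1 : H)))
      = (LinearMap.lTensor H (Coalgebra.comul (R := k) (A := H)) F) * ((1 : H) ⊗ₜ[k] F))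
    (hcounit_l : (TensorProduct.lid k H)
        (LinearMap.rTensor H (Coalgebra.counit (R := k) (A := H)) F) = 1)
    (hcounit_r : (TensorProduct.rid k H)
        (LinearMap.lTensor H (Coalgebra.counit (R := k) (A := H)) F) = 1)
    -- the twisted comultiplication `Δ_F(h) = F⁻¹ · Δ(h) · F`, as a `k`-linear map
    (ΔF : H →ₗ[k] H ⊗[k] H)
    (hΔF : ∀ h : H, ΔF h = Finv * (Coalgebra.comul (R := k) (A := H) h) * F) :
    -- `Δ_F` is an algebra homomorphism: it preserves `1` and multiplication
    ΔF 1 = 1 ∧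
    (∀ a b : H, ΔF (a * b) = ΔF a * ΔF b) ∧
    -- `Δ_F` is coassociative
    ((TensorProduct.assoc k H H H).toLinearMap ∘ₗ (LinearMap.rTensor H ΔF) ∘ₗ ΔF
      = (LinearMap.lTensor H ΔF) ∘ₗ ΔF) ∧
    -- the original counit `ε` is a counit for `Δ_F`
    (∀ h : H, (TensorProduct.lid k H)
        (LinearMap.rTensor H (Coalgebra.counit (R := k) (A := H)) (ΔF h)) = h) ∧
    (∀ h : H, (TensorProduct.rid k H)
        (LinearMap.lTensor H (Coalgebra.counit (R := k) (A := H)) (ΔF h)) = h) := by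
  have key : ∀ x y : H ⊗[k] H, (Finv * x * F) * (Finv * y * F) = Finv * (x * y) * F := by
    intro x y
    simp only [mul_assoc]
    rw [← mul_assoc F Finv, hFinv, one_mul]
  have h1 : ΔF 1 = 1 := by
    rw [hΔF]; simp [hFinv']
  have h2 : ∀ a b : H, ΔF (a * b) = ΔF a * ΔF b := by
    intro a b
    rw [hΔF, hΔF, hΔF, Bialgebra.comul_mul, key]
  -- `ΔF` as an algebra hom
  set D : H →ₐ[k] H ⊗[k] H := AlgHom.ofLinearMap ΔF h1 h2 with hDdef
  set Δ : H →ₐ[k] H ⊗[k] H := Bialgebra.comulAlgHom k H with hΔdef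
  have hΔa : ∀ a : H, Δ a = Coalgebra.comul (R := k) (A := H) a := fun a => rfl
  have hDa : ∀ a : H, D a = ΔF a := fun a => rfl
  -- rTensor / lTensor identifications with algebra-hom tensor maps
  have hmapD : LinearMap.rTensor H ΔF
      = (Algebra.TensorProduct.map D (AlgHom.id k H)).toLinearMap := by
    apply TensorProduct.ext'; intro a b; rfl
  have hmapΔ : LinearMap.rTensor H (Coalgebra.comul (R := k) (A := H))
      = (Algebra.TensorProduct.map Δ (AlgHom.id k H)).toLinearMap := by
    apply TensorProduct.ext'; intro a b; rfl
  have hlmapD : LinearMap.lTensor H ΔF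
      = (Algebra.TensorProduct.map (AlgHom.id k H) D).toLinearMap := by
    apply TensorProduct.ext'; intro a b; rfl
  have hlmapΔ : LinearMap.lTensor H (Coalgebra.comul (R := k) (A := H))
      = (Algebra.TensorProduct.map (AlgHom.id k H) Δ).toLinearMap := by
    apply TensorProduct.ext'; intro a b; rfl
  set aA : (H ⊗[k] H) ⊗[k] H →ₐ[k] H ⊗[k] (H ⊗[k] H) :=
    (Algebra.TensorProduct.assoc k k k H H H).toAlgHom with haAdef
  have haA : ∀ x : (H ⊗[k] H) ⊗[k] H, aA x = (TensorProduct.assoc k H H H) x := fun x => rfl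
  set mD := Algebra.TensorProduct.map D (AlgHom.id k H) with hmDdef
  set mΔ := Algebra.TensorProduct.map Δ (AlgHom.id k H) with hmΔdef
  set mD' := Algebra.TensorProduct.map (AlgHom.id k H) D with hmD'def
  set mΔ' := Algebra.TensorProduct.map (AlgHom.id k H) Δ with hmΔ'def
  -- conjugation descriptions
  have hconj : ∀ x : H ⊗[k] H,
      mD x = (Finv ⊗ₜ[k] (1 : H)) * mΔ x * (F ⊗ₜ[k] (1 : H)) := by
    intro x
    induction x using TensorProduct.induction_on with
    | zero => simp
    | tmul a b =>
        simp only [hmDdef, hmΔdef, Algebra.TensorProduct.map_tmul, AlgHom.coe_id, id_eq,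
          Algebra.TensorProduct.tmul_mul_tmul, one_mul, mul_one, hDa, hΔa, hΔF]
    | add x y hx hy => simp [mul_add, add_mul, hx, hy]
  have hconj' : ∀ x : H ⊗[k] H,
      mD' x = ((1 : H) ⊗ₜ[k] Finv) * mΔ' x * ((1 : H) ⊗ₜ[k] F) := by
    intro x
    induction x using TensorProduct.induction_on with
    | zero => simp
    | tmul a b =>
        simp only [hmD'def, hmΔ'def, Algebra.TensorProduct.map_tmul, AlgHom.coe_id, id_eq,
          Algebra.TensorProduct.tmul_mul_tmul, one_mul, mul_one, hDa, hΔa, hΔF]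
    | add x y hx hy => simp [mul_add, add_mul, hx, hy]
  -- coassociativity
  have h3 : ((TensorProduct.assoc k H H H).toLinearMap ∘ₗ (LinearMap.rTensor H ΔF) ∘ₗ ΔF
      = (LinearMap.lTensor H ΔF) ∘ₗ ΔF) := by
    apply LinearMap.ext; intro h
    simp only [LinearMap.comp_apply, LinearEquiv.coe_coe]
    rw [← haA, hmapD, hlmapD]
    show aA (mD (ΔF h)) = mD' (ΔF h)
    rw [hΔF, hconj]
    rw [map_mul mΔ, map_mul mΔ]
    -- abbreviations
    set Rr := aA (mΔ F * (F ⊗ₜ[k] (1 : H))) with hRrdef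
    have e1 : LinearMap.rTensor H (Coalgebra.comul (R := k) (A := H)) F = mΔ F := by
      rw [hmapΔ]; rfl
    have e2 : LinearMap.lTensor H (Coalgebra.comul (R := k) (A := H)) F = mΔ' F := by
      rw [hlmapΔ]; rfl
    have hRr : Rr = mΔ' F * ((1 : H) ⊗ₜ[k] F) := by
      rw [hRrdef, ← e1, ← e2]
      exact htwist
    have hP : aA ((Finv ⊗ₜ[k] (1 : H)) * mΔ Finv)
        = ((1 : H) ⊗ₜ[k] Finv) * mΔ' Finv := by
      have h1' : aA ((Finv ⊗ₜ[k] (1 : H)) * mΔ Finv) * Rr = 1 := by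
        rw [hRrdef, ← map_mul]
        have : (Finv ⊗ₜ[k] (1 : H)) * mΔ Finv * (mΔ F * (F ⊗ₜ[k] (1 : H))) = 1 := by
          rw [mul_assoc (Finv ⊗ₜ[k] (1 : H)), ← mul_assoc (mΔ Finv), ← map_mul, hFinv',
            map_one, one_mul, Algebra.TensorProduct.tmul_mul_tmul, hFinv', one_mul]
          rfl
        rw [this, map_one]
      have h2' : Rr * (((1 : H) ⊗ₜ[k] Finv) * mΔ' Finv) = 1 := by
        rw [hRr, mul_assoc (mΔ' F), ← mul_assoc (((1:H) ⊗ₜ[k] F)),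
          Algebra.TensorProduct.tmul_mul_tmul, hFinv, one_mul,
          show (1:H) ⊗ₜ[k] (1 : H ⊗[k] H) = (1 : H ⊗[k] (H ⊗[k] H)) from rfl, one_mul,
          ← map_mul, hFinv, map_one]
      calc aA ((Finv ⊗ₜ[k] (1 : H)) * mΔ Finv)
          = aA ((Finv ⊗ₜ[k] (1 : H)) * mΔ Finv) * (Rr * (((1 : H) ⊗ₜ[k] Finv) * mΔ' Finv)) := by
            rw [h2', mul_one]
        _ = (aA ((Finv ⊗ₜ[k] (1 : H)) * mΔ Finv) * Rr) * (((1 : H) ⊗ₜ[k] Finv) * mΔ' Finv) := by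
            rw [mul_assoc]
        _ = ((1 : H) ⊗ₜ[k] Finv) * mΔ' Finv := by rw [h1', one_mul]
    have hQ : aA (mΔ (Coalgebra.comul (R := k) (A := H) h))
        = mΔ' (Coalgebra.comul (R := k) (A := H) h) := by
      rw [haA]
      rw [show (mΔ (Coalgebra.comul (R := k) (A := H) h))
          = LinearMap.rTensor H (Coalgebra.comul (R := k) (A := H))
              (Coalgebra.comul (R := k) (A := H) h) from by rw [hmapΔ]; rfl]
      rw [Coalgebra.coassoc_apply, hlmapΔ]; rfl
    calc aA ((Finv ⊗ₜ[k] (1 : H))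
            * (mΔ Finv * mΔ (Coalgebra.comul (R := k) (A := H) h) * mΔ F) * (F ⊗ₜ[k] (1 : H)))
        = aA (((Finv ⊗ₜ[k] (1 : H)) * mΔ Finv) * mΔ (Coalgebra.comul (R := k) (A := H) h)
            * (mΔ F * (F ⊗ₜ[k] (1 : H)))) := by
          congr 1; simp only [mul_assoc]
      _ = aA ((Finv ⊗ₜ[k] (1 : H)) * mΔ Finv) * aA (mΔ (Coalgebra.comul (R := k) (A := H) h))
            * Rr := by
          rw [map_mul aA, map_mul aA, hRrdef]
      _ = ((1 : H) ⊗ₜ[k] Finv) * mΔ' Finv * mΔ' (Coalgebra.comul (R := k) (A := H) h)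
            * (mΔ' F * ((1 : H) ⊗ₜ[k] F)) := by rw [hP, hQ, hRr]
      _ = ((1 : H) ⊗ₜ[k] Finv) * mΔ' (Finv * Coalgebra.comul (R := k) (A := H) h * F)
            * ((1 : H) ⊗ₜ[k] F) := by
          simp only [map_mul, mul_assoc]
      _ = mD' (Finv * Coalgebra.comul (R := k) (A := H) h * F) := (hconj' _).symm
    -- massage goal shape
  -- counit axioms
  set E : H ⊗[k] H →ₐ[k] H :=
    (Algebra.TensorProduct.lid k H).toAlgHom.comp
      (Algebra.TensorProduct.map (Bialgebra.counitAlgHom k H) (AlgHom.id k H)) with hEdef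
  have hE : ∀ x : H ⊗[k] H,
      E x = (TensorProduct.lid k H)
        (LinearMap.rTensor H (Coalgebra.counit (R := k) (A := H)) x) := by
    intro x
    induction x using TensorProduct.induction_on with
    | zero => simp
    | tmul a b =>
        simp only [hEdef, AlgHom.coe_comp, Function.comp_apply,
          Algebra.TensorProduct.map_tmul, AlgHom.coe_id, id_eq, AlgEquiv.toAlgHom_eq_coe,
          AlgHom.coe_coe, AlgEquiv.coe_toAlgHom, Algebra.TensorProduct.lid_tmul, LinearMap.rTensor_tmul,
          TensorProduct.lid_tmul, Bialgebra.counitAlgHom_apply]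
    | add x y hx hy => simp only [map_add, hx, hy]
  set E' : H ⊗[k] H →ₐ[k] H :=
    (Algebra.TensorProduct.rid k k H).toAlgHom.comp
      (Algebra.TensorProduct.map (AlgHom.id k H) (Bialgebra.counitAlgHom k H)) with hE'def
  have hE' : ∀ x : H ⊗[k] H,
      E' x = (TensorProduct.rid k H)
        (LinearMap.lTensor H (Coalgebra.counit (R := k) (A := H)) x) := by
    intro x
    induction x using TensorProduct.induction_on with
    | zero => simp
    | tmul a b =>
        simp only [hE'def, AlgHom.coe_comp, Function.comp_apply,
          Algebra.TensorProduct.map_tmul, AlgHom.coe_id, id_eq, AlgEquiv.toAlgHom_eq_coe,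
          AlgHom.coe_coe, AlgEquiv.coe_toAlgHom, Algebra.TensorProduct.rid_tmul, LinearMap.lTensor_tmul,
          TensorProduct.rid_tmul, Bialgebra.counitAlgHom_apply]
    | add x y hx hy => simp only [map_add, hx, hy]
  have hEF : E F = 1 := by rw [hE]; exact hcounit_l
  have hE'F : E' F = 1 := by rw [hE']; exact hcounit_r
  have hEFinv : E Finv = 1 := by
    have := congrArg E hFinv'
    rwa [map_mul, map_one, hEF, mul_one] at this
  have hE'Finv : E' Finv = 1 := by
    have := congrArg E' hFinv'
    rwa [map_mul, map_one, hE'F, mul_one] at this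
  have h4 : ∀ h : H, (TensorProduct.lid k H)
      (LinearMap.rTensor H (Coalgebra.counit (R := k) (A := H)) (ΔF h)) = h := by
    intro h
    rw [← hE, hΔF, map_mul, map_mul, hEF, hEFinv, one_mul, mul_one, hE,
      Coalgebra.rTensor_counit_comul]
    simp
  have h5 : ∀ h : H, (TensorProduct.rid k H)
      (LinearMap.lTensor H (Coalgebra.counit (R := k) (A := H)) (ΔF h)) = h := by
    intro h
    rw [← hE', hΔF, map_mul, map_mul, hE'F, hE'Finv, one_mul, mul_one, hE',
      Coalgebra.lTensor_counit_comul]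
    simp
  exact ⟨h1, h2, h3, h4, h5⟩
end
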